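/- Let p be a prime with p = nk+1 for integers n ≥ 3, k ≥ 1. Then the (k+1)×(k+1) matrix over F_p whose (i,j) entry is the binomial coefficient C((n-1)k, k-i+j) mod p (for 0 ≤ i,j ≤ k) has determinant equal to 1 in F_p. -/
import Mathlib

open Finset Matrix

/-- Vandermonde's identity as a range sum (first orientation). -/
private lemma vand' (m n r : ℕ) :
    (m + n).choose r = ∑ s ∈ range (r + 1), m.choose s * n.choose (r - s) := by
  rw [Nat.add_choose_eq, Finset.Nat.sum_antidiagonal_eq_sum_range_succ_mk]

/-- Vandermonde's identity as a range sum (second orientation). -/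
private lemma vand (m n r : ℕ) :
    (m + n).choose r = ∑ s ∈ range (r + 1), m.choose (r - s) * n.choose s := by
  rw [Nat.add_choose_eq, ← Finset.Nat.sum_antidiagonal_swap,
    Finset.Nat.sum_antidiagonal_eq_sum_range_succ_mk]
  simp

private lemma natV1 (k j t : ℕ) (ht : t ≤ k) :
    ∑ s ∈ range (k + 1), (if s ≤ t then k.choose (t - s) else 0) * j.choose s
      = (k + j).choose t := by
  rw [vand k j t]
  rw [← Finset.sum_subset (Finset.range_subset_range.2 (by omega : t + 1 ≤ k + 1))
    (fun s hs hns => by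
      simp only [Finset.mem_range] at hs hns
      rw [if_neg (by omega), zero_mul])]
  refine Finset.sum_congr rfl fun s hs => ?_
  simp only [Finset.mem_range] at hs
  rw [if_pos (by omega)]

private lemma natV2 (k j i : ℕ) (hi : i ≤ k) :
    ∑ t ∈ range (k + 1), (if i ≤ t then (k - i).choose (t - i) else 0) * (k + j).choose t
      = (k + (k + j - i)).choose (k + j - i) := by
  have hkk : k + 1 = i + (k + 1 - i) := by omega
  rw [hkk, Finset.sum_range_add]
  have h0 : ∑ t ∈ range i,
      (if i ≤ t then (k - i).choose (t - i) else 0) * (k + j).choose t = 0 := by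
    refine Finset.sum_eq_zero fun t ht => ?_
    simp only [Finset.mem_range] at ht
    rw [if_neg (by omega), zero_mul]
  rw [h0, zero_add]
  have hmm : k + (k + j - i) = (k - i) + (k + j) := by omega
  rw [hmm, vand' (k - i) (k + j) (k + j - i)]
  have h1 : ∀ s ∈ range (k + 1 - i),
      (if i ≤ i + s then (k - i).choose (i + s - i) else 0) * (k + j).choose (i + s)
        = (k - i).choose s * (k + j).choose (k + j - i - s) := by
    intro s hs
    simp only [Finset.mem_range] at hs
    rw [if_pos (by omega), Nat.add_sub_cancel_left]
    congr 1
    rw [← Nat.choose_symm (by omega : i + s ≤ k + j)]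
    congr 1
    omega
  rw [Finset.sum_congr rfl h1]
  refine Finset.sum_subset (Finset.range_subset_range.2 (by omega)) fun s hs hns => ?_
  simp only [Finset.mem_range] at hs hns
  rw [Nat.choose_eq_zero_of_lt (by omega), zero_mul]

/-- Key congruence: `C(m, r) ≡ (-1)^r C(k+r, r) (mod p)` when `p = m + k + 1` and `r ≤ m`. -/
private lemma key_cong (p m k r : ℕ) [Fact p.Prime] (hp : p = m + k + 1) (hr : r ≤ m) :
    ((m.choose r : ℕ) : ZMod p) = (-1) ^ r * (((k + r).choose r : ℕ) : ZMod p) := by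
  have hprime : p.Prime := Fact.out
  have hfac : ((r.factorial : ℕ) : ZMod p) ≠ 0 := by
    rw [Ne, ZMod.natCast_eq_zero_iff, hprime.dvd_factorial]
    omega
  apply mul_right_cancel₀ hfac
  have e1 : (m.choose r) * r.factorial = m.descFactorial r := by
    rw [Nat.descFactorial_eq_factorial_mul_choose, mul_comm]
  have e2 : ((k + r).choose r) * r.factorial = (k + r).descFactorial r := by
    rw [Nat.descFactorial_eq_factorial_mul_choose, mul_comm]
  rw [← Nat.cast_mul, e1, mul_assoc, ← Nat.cast_mul, e2]
  rw [Nat.descFactorial_eq_prod_range, Nat.descFactorial_eq_prod_range,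
    Nat.cast_prod, Nat.cast_prod]
  have h3 : ∀ i ∈ range r, ((m - i : ℕ) : ZMod p) = (-1) * ((k + 1 + i : ℕ) : ZMod p) := by
    intro i hi
    simp only [Finset.mem_range] at hi
    have hadd : (m - i) + (k + 1 + i) = p := by omega
    have hcast : ((m - i : ℕ) : ZMod p) + ((k + 1 + i : ℕ) : ZMod p) = 0 := by
      rw [← Nat.cast_add, hadd, ZMod.natCast_self]
    rw [neg_one_mul]
    exact eq_neg_of_add_eq_zero_left hcast
  calc (∏ i ∈ range r, ((m - i : ℕ) : ZMod p))
      = ∏ i ∈ range r, (-1) * ((k + 1 + i : ℕ) : ZMod p) := Finset.prod_congr rfl h3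
    _ = (-1) ^ r * ∏ i ∈ range r, ((k + 1 + i : ℕ) : ZMod p) := by
        rw [Finset.prod_mul_distrib, Finset.prod_const, Finset.card_range]
    _ = (-1) ^ r * ∏ i ∈ range r, ((k + r - i : ℕ) : ZMod p) := by
        congr 1
        rw [← Finset.prod_range_reflect (fun i => ((k + r - i : ℕ) : ZMod p)) r]
        refine Finset.prod_congr rfl fun i hi => ?_
        simp only [Finset.mem_range] at hi
        congr 1
        omega

theorem stmt_10 (p n k : ℕ) [Fact p.Prime] (hn : 3 ≤ n) (hk : 1 ≤ k)
    (hp : p = n * k + 1) :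
    (Matrix.of fun i j : Fin (k + 1) =>
        ((((n - 1) * k).choose (k + (j : ℕ) - (i : ℕ)) : ZMod p))).det = 1 := by
  set m := (n - 1) * k with hm
  have hpm : p = m + k + 1 := by
    have h1 : (n - 1) * k + k = ((n - 1) + 1) * k := by ring
    rw [hp, hm, h1, Nat.sub_add_cancel (by omega)]
  have h2k : 2 * k ≤ m := by
    calc 2 * k ≤ (n - 1) * k := Nat.mul_le_mul_right k (by omega)
      _ = m := hm.symm
  -- the auxiliary matrices
  set B : Matrix (Fin (k + 1)) (Fin (k + 1)) (ZMod p) :=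
    Matrix.of fun i j =>
      (((k + (k + (j : ℕ) - (i : ℕ))).choose (k + (j : ℕ) - (i : ℕ)) : ℕ) : ZMod p) with hBdef
  set U : Matrix (Fin (k + 1)) (Fin (k + 1)) (ZMod p) :=
    Matrix.of fun i t =>
      if (i : ℕ) ≤ (t : ℕ) then (((k - (i : ℕ)).choose ((t : ℕ) - (i : ℕ)) : ℕ) : ZMod p)
      else 0 with hUdef
  set V : Matrix (Fin (k + 1)) (Fin (k + 1)) (ZMod p) :=
    Matrix.of fun t j => (((k + (j : ℕ)).choose (t : ℕ) : ℕ) : ZMod p) with hVdef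
  set W : Matrix (Fin (k + 1)) (Fin (k + 1)) (ZMod p) :=
    Matrix.of fun t s =>
      if (s : ℕ) ≤ (t : ℕ) then ((k.choose ((t : ℕ) - (s : ℕ)) : ℕ) : ZMod p)
      else 0 with hWdef
  set Z : Matrix (Fin (k + 1)) (Fin (k + 1)) (ZMod p) :=
    Matrix.of fun s j => (((j : ℕ).choose (s : ℕ) : ℕ) : ZMod p) with hZdef
  set D1 : Matrix (Fin (k + 1)) (Fin (k + 1)) (ZMod p) :=
    Matrix.diagonal fun i => (-1 : ZMod p) ^ (i : ℕ) with hD1def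
  set D2 : Matrix (Fin (k + 1)) (Fin (k + 1)) (ZMod p) :=
    Matrix.diagonal fun j => (-1 : ZMod p) ^ (k + (j : ℕ)) with hD2def
  -- W * Z = V
  have hWZ : W * Z = V := by
    ext t j
    rw [Matrix.mul_apply]
    calc ∑ s : Fin (k + 1), W t s * Z s j
        = ∑ s ∈ range (k + 1),
            ((((if s ≤ (t : ℕ) then k.choose ((t : ℕ) - s) else 0) * (j : ℕ).choose s : ℕ))
              : ZMod p) := by
          rw [← Fin.sum_univ_eq_sum_range (fun s =>
            ((((if s ≤ (t : ℕ) then k.choose ((t : ℕ) - s) else 0) * (j : ℕ).choose s : ℕ))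
              : ZMod p)) (k + 1)]
          refine Finset.sum_congr rfl fun s _ => ?_
          simp [hWdef, hZdef, Nat.cast_mul, apply_ite (Nat.cast : ℕ → ZMod p)]
      _ = (((k + (j : ℕ)).choose (t : ℕ) : ℕ) : ZMod p) := by
          rw [← Nat.cast_sum, natV1 k (j : ℕ) (t : ℕ) t.is_le]
      _ = V t j := rfl
  -- U * V = B
  have hUV : U * V = B := by
    ext i j
    rw [Matrix.mul_apply]
    calc ∑ t : Fin (k + 1), U i t * V t j
        = ∑ t ∈ range (k + 1),
            ((((if (i : ℕ) ≤ t then (k - (i : ℕ)).choose (t - (i : ℕ)) else 0)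
              * (k + (j : ℕ)).choose t : ℕ)) : ZMod p) := by
          rw [← Fin.sum_univ_eq_sum_range (fun t =>
            ((((if (i : ℕ) ≤ t then (k - (i : ℕ)).choose (t - (i : ℕ)) else 0)
              * (k + (j : ℕ)).choose t : ℕ)) : ZMod p)) (k + 1)]
          refine Finset.sum_congr rfl fun t _ => ?_
          simp [hUdef, hVdef, Nat.cast_mul, apply_ite (Nat.cast : ℕ → ZMod p)]
      _ = B i j := by
          rw [← Nat.cast_sum, natV2 k (j : ℕ) (i : ℕ) i.is_le]
          rfl
  -- the goal matrix equals D1 * B * D2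
  have hA : (Matrix.of fun i j : Fin (k + 1) =>
      ((m.choose (k + (j : ℕ) - (i : ℕ)) : ZMod p))) = D1 * B * D2 := by
    ext i j
    have hij : (D1 * B * D2) i j = (-1 : ZMod p) ^ (i : ℕ) * B i j * (-1) ^ (k + (j : ℕ)) := by
      rw [hD1def, hD2def, Matrix.mul_diagonal, Matrix.diagonal_mul]
    rw [hij]
    have hile : (i : ℕ) ≤ k := i.is_le
    have hjle : (j : ℕ) ≤ k := j.is_le
    have hrm : k + (j : ℕ) - (i : ℕ) ≤ m := by omega
    have hkey := key_cong p m k (k + (j : ℕ) - (i : ℕ)) hpm hrm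
    have hsign : (-1 : ZMod p) ^ (i : ℕ) * (-1) ^ (k + (j : ℕ))
        = (-1) ^ (k + (j : ℕ) - (i : ℕ)) := by
      rw [← pow_add,
        show (i : ℕ) + (k + (j : ℕ)) = (k + (j : ℕ) - (i : ℕ)) + 2 * (i : ℕ) by omega,
        pow_add, pow_mul]
      norm_num
    calc (Matrix.of fun i j : Fin (k + 1) =>
          ((m.choose (k + (j : ℕ) - (i : ℕ)) : ZMod p))) i j
        = ((m.choose (k + (j : ℕ) - (i : ℕ)) : ℕ) : ZMod p) := rfl
      _ = (-1) ^ (k + (j : ℕ) - (i : ℕ))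
            * (((k + (k + (j : ℕ) - (i : ℕ))).choose (k + (j : ℕ) - (i : ℕ)) : ℕ) : ZMod p) :=
          hkey
      _ = (-1 : ZMod p) ^ (i : ℕ) * B i j * (-1) ^ (k + (j : ℕ)) := by
          rw [mul_comm ((-1 : ZMod p) ^ (i : ℕ) * B i j) _, ← mul_assoc, mul_comm _ ((-1 : ZMod p) ^ (i : ℕ)), hsign]
          rfl
  -- determinants of the triangular factors
  have hU : U.det = 1 := by
    rw [Matrix.det_of_upperTriangular (M := U) (fun i t hit => by
      rw [hUdef, Matrix.of_apply, if_neg (by exact fun h => absurd (Fin.lt_iff_val_lt_val.mp hit) (not_lt.mpr h))])]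
    refine Finset.prod_eq_one fun i _ => ?_
    rw [hUdef, Matrix.of_apply, if_pos le_rfl]
    simp
  have hW : W.det = 1 := by
    have hlow : W.BlockTriangular ⇑OrderDual.toDual := by
      intro t s hts
      have hts' : (t : Fin (k + 1)) < s := hts
      rw [hWdef, Matrix.of_apply, if_neg
        (fun h => absurd (Fin.lt_iff_val_lt_val.mp hts') (not_lt.mpr h))]
    rw [Matrix.det_of_lowerTriangular W hlow]
    refine Finset.prod_eq_one fun t _ => ?_
    rw [hWdef, Matrix.of_apply, if_pos le_rfl]
    simp
  have hZ : Z.det = 1 := by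
    have hupp : Z.BlockTriangular id := by
      intro s j hsj
      have h' : (j : ℕ) < (s : ℕ) := hsj
      rw [hZdef, Matrix.of_apply, Nat.choose_eq_zero_of_lt h', Nat.cast_zero]
    rw [Matrix.det_of_upperTriangular hupp]
    refine Finset.prod_eq_one fun s _ => ?_
    rw [hZdef, Matrix.of_apply]
    simp
  -- put everything together
  rw [hA, ← hUV, ← hWZ, Matrix.det_mul, Matrix.det_mul, Matrix.det_mul, Matrix.det_mul,
    hU, hW, hZ, hD1def, hD2def, Matrix.det_diagonal, Matrix.det_diagonal]
  rw [mul_one, mul_one, mul_one, ← Finset.prod_mul_distrib]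
  calc (∏ i : Fin (k + 1), ((-1 : ZMod p) ^ (i : ℕ) * (-1) ^ (k + (i : ℕ))))
      = ∏ i : Fin (k + 1), ((-1 : ZMod p) ^ k) := by
        refine Finset.prod_congr rfl fun i _ => ?_
        rw [← pow_add, show (i : ℕ) + (k + (i : ℕ)) = k + 2 * (i : ℕ) by omega,
          pow_add, pow_mul]
        norm_num
    _ = ((-1 : ZMod p) ^ k) ^ (k + 1) := by
        rw [Finset.prod_const, Finset.card_univ, Fintype.card_fin]
    _ = (-1 : ZMod p) ^ (k * (k + 1)) := by rw [← pow_mul]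
    _ = 1 := Even.neg_one_pow (Nat.even_mul_succ_self k)
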